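/- Let E : ℝ² → ℝ be differentiable. Then for every j ∈ {1,2,3} and every point p = (x,y,z) ∈ ℝ³, the Lie bracket of the vector fields f₀ and f_j satisfies [f₀, f_j](p) = ( −(γ₁ⱼβ₁₁ + γ₁ⱼβ₁₂ ∂E/∂x(x,y) + γ₂ⱼβ₁₂ ∂E/∂y(x,y)), −(γ₂ⱼβ₂₂ + γ₁ⱼβ₂₂′ ∂E/∂x(x,y) + γ₂ⱼβ₂₂′ ∂E/∂y(x,y)), −γ₂ⱼβ₃₂ ). -/

import Mathlib

open VectorField

/-- Partial derivative with respect to the first variable. -/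
noncomputable def pdx (E : ℝ × ℝ → ℝ) (q : ℝ × ℝ) : ℝ := fderiv ℝ E q (1, 0)

/-- Partial derivative with respect to the second variable. -/
noncomputable def pdy (E : ℝ × ℝ → ℝ) (q : ℝ × ℝ) : ℝ := fderiv ℝ E q (0, 1)

theorem stmt0 (α₁ α₂ α₃ β₁₁ β₁₂ β₁₃ β₂₂ β₂₂' β₃₂ β₃₃ : ℝ)
    (γ₁ γ₂ : Fin 3 → ℝ) (E : ℝ × ℝ → ℝ) (hE : Differentiable ℝ E)
    (f₀ : ℝ × ℝ × ℝ → ℝ × ℝ × ℝ)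
    (hf₀ : f₀ = fun p => (α₁ + β₁₁ * p.1 + β₁₂ * E (p.1, p.2.1),
      α₂ + β₂₂ * p.2.1 + β₂₂' * E (p.1, p.2.1) + β₁₃ * p.2.2,
      α₃ + β₃₂ * p.2.1 + β₃₃ * p.2.2))
    (f : Fin 3 → ℝ × ℝ × ℝ → ℝ × ℝ × ℝ)
    (hf : f = fun j _ => (γ₁ j, γ₂ j, (0 : ℝ))) :
    ∀ j : Fin 3, ∀ p : ℝ × ℝ × ℝ,
      lieBracket ℝ f₀ (f j) p =
        (-(γ₁ j * β₁₁ + γ₁ j * β₁₂ * pdx E (p.1, p.2.1) + γ₂ j * β₁₂ * pdy E (p.1, p.2.1)),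
         -(γ₂ j * β₂₂ + γ₁ j * β₂₂' * pdx E (p.1, p.2.1) + γ₂ j * β₂₂' * pdy E (p.1, p.2.1)),
         -(γ₂ j * β₃₂)) := by
  subst hf₀ hf
  intro j p
  set q : ℝ × ℝ := (p.1, p.2.1) with hq
  set L := fderiv ℝ E q with hL
  have hEq : HasFDerivAt E L q := (hE q).hasFDerivAt
  let π : (ℝ × ℝ × ℝ) →L[ℝ] (ℝ × ℝ) :=
    (ContinuousLinearMap.fst ℝ ℝ (ℝ × ℝ)).prod
      ((ContinuousLinearMap.fst ℝ ℝ ℝ).comp (ContinuousLinearMap.snd ℝ ℝ (ℝ × ℝ)))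
  have hπ : HasFDerivAt (fun p : ℝ × ℝ × ℝ => ((p.1, p.2.1) : ℝ × ℝ)) π p :=
    π.hasFDerivAt
  have hEπ : HasFDerivAt (fun p : ℝ × ℝ × ℝ => E (p.1, p.2.1)) (L.comp π) p :=
    hEq.comp p hπ
  let P1 : (ℝ × ℝ × ℝ) →L[ℝ] ℝ := ContinuousLinearMap.fst ℝ ℝ (ℝ × ℝ)
  let P2 : (ℝ × ℝ × ℝ) →L[ℝ] ℝ :=
    (ContinuousLinearMap.fst ℝ ℝ ℝ).comp (ContinuousLinearMap.snd ℝ ℝ (ℝ × ℝ))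
  let P3 : (ℝ × ℝ × ℝ) →L[ℝ] ℝ :=
    (ContinuousLinearMap.snd ℝ ℝ ℝ).comp (ContinuousLinearMap.snd ℝ ℝ (ℝ × ℝ))
  have hp1 : HasFDerivAt (fun p : ℝ × ℝ × ℝ => p.1) P1 p := P1.hasFDerivAt
  have hp2 : HasFDerivAt (fun p : ℝ × ℝ × ℝ => p.2.1) P2 p := P2.hasFDerivAt
  have hp3 : HasFDerivAt (fun p : ℝ × ℝ × ℝ => p.2.2) P3 p := P3.hasFDerivAt
  have h1 : HasFDerivAt (fun p : ℝ × ℝ × ℝ => α₁ + β₁₁ * p.1 + β₁₂ * E (p.1, p.2.1))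
      ((0 + β₁₁ • P1) + β₁₂ • (L.comp π)) p :=
    (((hasFDerivAt_const α₁ p).add (hp1.const_mul β₁₁)).add (hEπ.const_mul β₁₂))
  have h2 : HasFDerivAt
      (fun p : ℝ × ℝ × ℝ => α₂ + β₂₂ * p.2.1 + β₂₂' * E (p.1, p.2.1) + β₁₃ * p.2.2)
      (((0 + β₂₂ • P2) + β₂₂' • (L.comp π)) + β₁₃ • P3) p :=
    ((((hasFDerivAt_const α₂ p).add (hp2.const_mul β₂₂)).add
      (hEπ.const_mul β₂₂')).add (hp3.const_mul β₁₃))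
  have h3 : HasFDerivAt (fun p : ℝ × ℝ × ℝ => α₃ + β₃₂ * p.2.1 + β₃₃ * p.2.2)
      ((0 + β₃₂ • P2) + β₃₃ • P3) p :=
    (((hasFDerivAt_const α₃ p).add (hp2.const_mul β₃₂)).add (hp3.const_mul β₃₃))
  have hD : HasFDerivAt (fun p : ℝ × ℝ × ℝ => (α₁ + β₁₁ * p.1 + β₁₂ * E (p.1, p.2.1),
      α₂ + β₂₂ * p.2.1 + β₂₂' * E (p.1, p.2.1) + β₁₃ * p.2.2,
      α₃ + β₃₂ * p.2.1 + β₃₃ * p.2.2))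
      (((0 + β₁₁ • P1) + β₁₂ • (L.comp π)).prod
        ((((0 + β₂₂ • P2) + β₂₂' • (L.comp π)) + β₁₃ • P3).prod
          ((0 + β₃₂ • P2) + β₃₃ • P3))) p := h1.prodMk (h2.prodMk h3)
  have hLlin : ∀ a b : ℝ, L (a, b) = a * L (1, 0) + b * L (0, 1) := by
    intro a b
    have : ((a, b) : ℝ × ℝ) = a • ((1, 0) : ℝ × ℝ) + b • ((0, 1) : ℝ × ℝ) := by
      simp [Prod.ext_iff]
    rw [this, map_add, map_smul, map_smul]
    simp [smul_eq_mul]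
  rw [lieBracket]
  rw [hD.fderiv, fderiv_const_apply]
  simp only [ContinuousLinearMap.zero_apply, zero_sub]
  simp only [ContinuousLinearMap.prod_apply, ContinuousLinearMap.add_apply,
    ContinuousLinearMap.smul_apply, ContinuousLinearMap.coe_comp',
    Function.comp_apply, ContinuousLinearMap.zero_apply, P1, P2, P3, π,
    ContinuousLinearMap.coe_fst', ContinuousLinearMap.coe_snd',
    ContinuousLinearMap.prod_apply]
  rw [hLlin (γ₁ j) (γ₂ j)]
  simp only [pdx, pdy, ← hL, ← hq]
  simp only [Prod.neg_mk, Prod.mk.injEq, smul_eq_mul]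
  refine ⟨by ring, by ring, by ring⟩
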